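/- Perturbation bound for log-det capacity: for matrices G, G̃ ∈ ℂ^{N×M}, Hermitian PSD Σ with operator norm ‖Σ‖ ≤ λ, and γ > 0, |log det(I + γ G Σ G^H) − log det(I + γ G̃ Σ G̃^H)| ≤ γ λ (‖G‖_F + ‖G̃‖_F) ‖G − G̃‖_F, where ‖·‖_F is the Frobenius norm. -/

import Mathlib

open Matrix
open scoped ComplexOrder

/-- Frobenius norm of a complex matrix. -/
noncomputable def frob {N M : ℕ} (A : Matrix (Fin N) (Fin M) ℂ) : ℝ :=
  Real.sqrt (∑ i, ∑ j, ‖A i j‖ ^ 2)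

set_option linter.unusedSectionVars false

section Aux
variable {n m : Type*} [Fintype n] [DecidableEq n] [Fintype m] [DecidableEq m]

open scoped MatrixOrder in
/-- square root of a PSD matrix (continuous functional calculus). -/
noncomputable def Matrix.PosSemidef.sqrt {A : Matrix n n ℂ} (_hA : A.PosSemidef) :
    Matrix n n ℂ :=
  CFC.sqrt A

open scoped MatrixOrder in
lemma Matrix.PosSemidef.posSemidef_sqrt {A : Matrix n n ℂ} (hA : A.PosSemidef) :
    hA.sqrt.PosSemidef :=
  Matrix.nonneg_iff_posSemidef.mp (CFC.sqrt_nonneg A)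

open scoped MatrixOrder in
lemma Matrix.PosSemidef.sqrt_mul_self {A : Matrix n n ℂ} (hA : A.PosSemidef) :
    hA.sqrt * hA.sqrt = A :=
  CFC.sqrt_mul_sqrt_self A (Matrix.nonneg_iff_posSemidef.mpr hA)

/-- trace of a PSD matrix is nonnegative (complex order). -/
lemma aux_trace_nonneg {A : Matrix n n ℂ} (hA : A.PosSemidef) : 0 ≤ A.trace := by
  have h : ∀ i, 0 ≤ A i i := by
    intro i
    have := hA.dotProduct_mulVec_nonneg (Pi.single i 1)
    simpa [dotProduct, mulVec, Pi.single_apply, Finset.sum_ite_eq] using this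
  exact Finset.sum_nonneg fun i _ => h i

/-- trace of a product of PSD matrices is nonnegative. -/
lemma aux_trace_mul_nonneg {A B : Matrix n n ℂ} (hA : A.PosSemidef) (hB : B.PosSemidef) :
    0 ≤ (A * B).trace := by
  have h1 : (A * B).trace = (hB.sqrt * A * hB.sqrt).trace := by
    conv_lhs => rw [← hB.sqrt_mul_self]
    rw [← mul_assoc, trace_mul_comm, ← mul_assoc]
  have h2 : (hB.sqrt * A * hB.sqrt).PosSemidef := by
    have := hA.mul_mul_conjTranspose_same hB.sqrt
    rwa [hB.posSemidef_sqrt.1] at this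
  rw [h1]; exact aux_trace_nonneg h2

lemma aux_re_nonneg {z : ℂ} (h : 0 ≤ z) : 0 ≤ z.re := by
  simpa using (Complex.le_def.mp h).1

lemma aux_trace_mul_conjTranspose_self {N M : ℕ} (A : Matrix (Fin N) (Fin M) ℂ) :
    (A * Aᴴ).trace.re = ∑ i, ∑ j, ‖A i j‖ ^ 2 := by
  have : (A * Aᴴ).trace = ((∑ i, ∑ j, ‖A i j‖ ^ 2 : ℝ) : ℂ) := by
    simp only [Matrix.trace, Matrix.diag, Matrix.mul_apply, Matrix.conjTranspose_apply]
    push_cast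
    congr 1
    ext i
    congr 1
    ext j
    rw [← Complex.ofReal_pow, Complex.sq_norm, ← Complex.mul_conj]
    rfl
  rw [this, Complex.ofReal_re]

lemma frob_nonneg {N M : ℕ} (A : Matrix (Fin N) (Fin M) ℂ) : 0 ≤ frob A :=
  Real.sqrt_nonneg _

lemma frob_sq {N M : ℕ} (A : Matrix (Fin N) (Fin M) ℂ) :
    frob A ^ 2 = (A * Aᴴ).trace.re := by
  rw [aux_trace_mul_conjTranspose_self, frob, Real.sq_sqrt]
  positivity

lemma frob_cauchy_schwarz {N M : ℕ} (A B : Matrix (Fin N) (Fin M) ℂ) :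
    |(A * Bᴴ).trace.re| ≤ frob A * frob B := by
  have h1 : |(A * Bᴴ).trace.re| ≤ ∑ i, ∑ j, ‖A i j‖ * ‖B i j‖ := by
    have : (A * Bᴴ).trace.re = ∑ i, ∑ j, (A i j * (starRingEnd ℂ) (B i j)).re := by
      simp [Matrix.trace, Matrix.diag, Matrix.mul_apply, Matrix.conjTranspose_apply,
        Complex.re_sum]
    rw [this]
    refine (Finset.abs_sum_le_sum_abs _ _).trans ?_
    refine Finset.sum_le_sum fun i _ => ?_
    refine (Finset.abs_sum_le_sum_abs _ _).trans ?_
    refine Finset.sum_le_sum fun j _ => ?_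
    calc |(A i j * (starRingEnd ℂ) (B i j)).re| ≤ ‖A i j * (starRingEnd ℂ) (B i j)‖ :=
          Complex.abs_re_le_norm _
      _ = ‖A i j‖ * ‖B i j‖ := by
          rw [norm_mul, Complex.norm_conj]
  refine h1.trans ?_
  have h2 := Real.sum_mul_le_sqrt_mul_sqrt (Finset.univ : Finset (Fin N × Fin M))
    (fun p => ‖A p.1 p.2‖) (fun p => ‖B p.1 p.2‖)
  simpa [Fintype.sum_prod_type, frob] using h2

/-- if `1 - P` is PSD and `Q` is PSD then `re tr (P Q) ≤ re tr Q`. -/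
lemma aux_trace_mono_one {P Q : Matrix n n ℂ} (hP : ((1 : Matrix n n ℂ) - P).PosSemidef)
    (hQ : Q.PosSemidef) : (P * Q).trace.re ≤ Q.trace.re := by
  have h := aux_re_nonneg (aux_trace_mul_nonneg hP hQ)
  rw [Matrix.sub_mul, Matrix.one_mul, trace_sub] at h
  simpa using sub_nonneg.mp (by simpa [Complex.sub_re] using h)

/-- if `lam•1 - S` is PSD and `Q` is PSD then `re tr (Q S) ≤ lam * re tr Q`. -/
lemma aux_trace_mul_le_smul {Q S : Matrix n n ℂ} {lam : ℝ}
    (hS : ((lam : ℂ) • (1 : Matrix n n ℂ) - S).PosSemidef) (hQ : Q.PosSemidef) :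
    (Q * S).trace.re ≤ lam * Q.trace.re := by
  have h := aux_re_nonneg (aux_trace_mul_nonneg hQ hS)
  rw [Matrix.mul_sub, trace_sub, mul_smul_comm, Matrix.mul_one, trace_smul] at h
  simpa [Complex.sub_re, Complex.smul_re, sub_nonneg] using h

lemma aux_one_sub_inv_psd {B : Matrix n n ℂ} (hB : B.PosSemidef) :
    ((1 : Matrix n n ℂ) - (1 + B)⁻¹).PosSemidef := by
  have hS : (1 + B).PosDef := Matrix.PosDef.add_posSemidef Matrix.PosDef.one hB
  have hU : IsUnit (1 + B).det := isUnit_iff_ne_zero.mpr hS.det_pos.ne'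
  have hBB : (B * B).PosSemidef := by
    have h := Matrix.posSemidef_self_mul_conjTranspose B
    rwa [hB.1] at h
  have hsum : (B + B * B).PosSemidef := hB.add hBB
  have hherm : ((1 + B)⁻¹)ᴴ = (1 + B)⁻¹ := by
    rw [Matrix.conjTranspose_nonsing_inv, hS.isHermitian]
  have hkey : (1 + B)⁻¹ * (B + B * B) * ((1 + B)⁻¹)ᴴ
      = (1 : Matrix n n ℂ) - (1 + B)⁻¹ := by
    rw [hherm]
    have e1 : B + B * B = B * (1 + B) := by rw [Matrix.mul_add, Matrix.mul_one]
    rw [e1]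
    simp only [Matrix.mul_assoc]
    rw [Matrix.mul_nonsing_inv _ hU, Matrix.mul_one]
    calc (1 + B)⁻¹ * B = (1 + B)⁻¹ * (1 + B) - (1 + B)⁻¹ * 1 := by
          rw [← Matrix.mul_sub]; congr 1; abel
      _ = 1 - (1 + B)⁻¹ := by rw [Matrix.nonsing_inv_mul _ hU, Matrix.mul_one]
  rw [← hkey]
  exact hsum.mul_mul_conjTranspose_same _

lemma aux_smul_psd {A : Matrix n n ℂ} (hA : A.PosSemidef) {γ : ℝ} (hγ : 0 ≤ γ) :
    ((γ : ℂ) • A).PosSemidef := by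
  refine Matrix.PosSemidef.of_dotProduct_mulVec_nonneg ?_ ?_
  · unfold Matrix.IsHermitian
    rw [Matrix.conjTranspose_smul, hA.1]
    congr 1
    simp [Complex.ext_iff]
  · intro x
    rw [Matrix.smul_mulVec, dotProduct_smul, smul_eq_mul]
    exact mul_nonneg (Complex.zero_le_real.mpr hγ) (hA.dotProduct_mulVec_nonneg x)

lemma aux_lam_smul_sub_psd {S : Matrix m m ℂ} (hS : S.PosSemidef) {lam : ℝ}
    (hEig : ∀ i, hS.1.eigenvalues i ≤ lam) :
    ((lam : ℂ) • (1 : Matrix m m ℂ) - S).PosSemidef := by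
  set U := (hS.1.eigenvectorUnitary : Matrix m m ℂ) with hUdef
  have hspec := hS.1.spectral_theorem
  have h1 : (lam : ℂ) • (1 : Matrix m m ℂ) = U * ((lam : ℂ) • 1) * star U := by
    rw [Matrix.mul_smul, Matrix.smul_mul, Matrix.mul_one, hUdef, ← Unitary.coe_star,
      Unitary.coe_mul_star_self]
  have hdiff : (lam : ℂ) • (1 : Matrix m m ℂ) - S
      = U * (Matrix.diagonal fun i => ((lam - hS.1.eigenvalues i : ℝ) : ℂ)) * star U := by
    conv_lhs => rw [h1, hspec, Unitary.conjStarAlgAut_apply]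
    rw [← Matrix.sub_mul, ← Matrix.mul_sub]
    congr 2
    ext i j
    rcases eq_or_ne i j with h | h <;>
      simp [Matrix.diagonal_apply, h, Matrix.one_apply, Complex.ext_iff, RCLike.ofReal]
  rw [hdiff]
  have hd : (Matrix.diagonal fun i => ((lam - hS.1.eigenvalues i : ℝ) : ℂ)).PosSemidef := by
    refine Matrix.PosSemidef.diagonal fun i => ?_
    exact Complex.zero_le_real.mpr (sub_nonneg.mpr (hEig i))
  have := hd.mul_mul_conjTranspose_same U
  rwa [← Matrix.star_eq_conjTranspose] at this

/-- trace of a Hermitian matrix equals the sum of its eigenvalues. -/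
lemma aux_trace_eq_sum_eigenvalues {A : Matrix n n ℂ} (hA : A.IsHermitian) :
    A.trace = ∑ i, (hA.eigenvalues i : ℂ) := by
  conv_lhs => rw [hA.spectral_theorem, Unitary.conjStarAlgAut_apply]
  rw [trace_mul_cycle]
  rw [Unitary.coe_star_mul_self, Matrix.one_mul, trace_diagonal]
  simp

/-- key concavity bound:
`log det(1+A) − log det(1+B) ≤ re tr((1+B)⁻¹ (A−B))` for PSD `A`, `B`. -/
lemma aux_logdet_key {A B : Matrix n n ℂ} (hA : A.PosSemidef) (hB : B.PosSemidef) :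
    Real.log ((1 + A).det.re) - Real.log ((1 + B).det.re) ≤
      (((1 + B)⁻¹) * (A - B)).trace.re := by
  have hSA : (1 + A).PosDef := Matrix.PosDef.add_posSemidef Matrix.PosDef.one hA
  have hSB : (1 + B).PosDef := Matrix.PosDef.add_posSemidef Matrix.PosDef.one hB
  have hdA := hSA.det_pos
  have hdB := hSB.det_pos
  have hdA' : 0 < (1 + A).det.re := (Complex.lt_def.mp hdA).1
  have hdB' : 0 < (1 + B).det.re := (Complex.lt_def.mp hdB).1
  have hdAim : (1 + A).det.im = 0 := ((Complex.lt_def.mp hdA).2).symm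
  have hdBim : (1 + B).det.im = 0 := ((Complex.lt_def.mp hdB).2).symm
  have hP : ((1 + B)⁻¹).PosDef := hSB.inv
  set R := hP.posSemidef.sqrt with hRdef
  have hRH : Rᴴ = R := hP.posSemidef.posSemidef_sqrt.1
  have hRR : R * R = (1 + B)⁻¹ := hP.posSemidef.sqrt_mul_self
  set C := R * (1 + A) * R with hCdef
  have hC : C.PosSemidef := by
    have := hSA.posSemidef.mul_mul_conjTranspose_same R
    rwa [hRH] at this
  -- trace identity
  have htrC : C.trace = ((1 + B)⁻¹ * (1 + A)).trace := by
    rw [hCdef, trace_mul_cycle, hRR]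
  -- determinant identity
  have hdetC : C.det = (1 + A).det * ((1 + B).det)⁻¹ := by
    rw [hCdef, Matrix.det_mul, Matrix.det_mul]
    have : R.det * R.det = ((1 + B).det)⁻¹ := by
      rw [← Matrix.det_mul, hRR, Matrix.det_nonsing_inv, Ring.inverse_eq_inv]
    rw [mul_comm R.det (1 + A).det, mul_assoc, this]
  have hdetCre : C.det.re = (1 + A).det.re / (1 + B).det.re := by
    rw [hdetC]
    have e1 : (1 + A).det = ((1 + A).det.re : ℂ) := Complex.ext rfl (by simp [hdAim])
    have e2 : (1 + B).det = ((1 + B).det.re : ℂ) := Complex.ext rfl (by simp [hdBim])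
    rw [e1, e2, ← Complex.ofReal_inv, ← Complex.ofReal_mul]
    simp
    ring
  have hdetCpos : 0 < C.det.re := by
    rw [hdetCre]; positivity
  -- eigenvalues of C
  set μ := hC.1.eigenvalues with hμdef
  have hprod : C.det.re = ∏ i, μ i := by
    have := hC.1.det_eq_prod_eigenvalues
    rw [this]
    norm_cast
  have hμ0 : ∀ i, 0 ≤ μ i := hC.eigenvalues_nonneg
  have hμpos : ∀ i, 0 < μ i := by
    intro i
    rcases (hμ0 i).lt_or_eq with h | h
    · exact h
    · exfalso
      have : C.det.re = 0 := by
        rw [hprod]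
        exact Finset.prod_eq_zero (Finset.mem_univ i) h.symm
      exact hdetCpos.ne' this
  have hsum : C.trace.re = ∑ i, μ i := by
    rw [aux_trace_eq_sum_eigenvalues hC.1]
    norm_cast
  -- the log inequality
  have hlog : Real.log ((1 + A).det.re) - Real.log ((1 + B).det.re) ≤
      C.trace.re - Fintype.card n := by
    rw [← Real.log_div hdA'.ne' hdB'.ne', ← hdetCre, hprod, hsum]
    rw [Real.log_prod fun i _ => (hμpos i).ne']
    have : ∑ i, Real.log (μ i) ≤ ∑ i, (μ i - 1) :=
      Finset.sum_le_sum fun i _ => Real.log_le_sub_one_of_pos (hμpos i)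
    calc ∑ i, Real.log (μ i) ≤ ∑ i, (μ i - 1) := this
      _ = (∑ i, μ i) - Fintype.card n := by
        rw [Finset.sum_sub_distrib]
        simp
  -- identify RHS
  have hinvmul : (1 + B)⁻¹ * (1 + B) = 1 :=
    Matrix.nonsing_inv_mul _ (isUnit_iff_ne_zero.mpr hdB.ne')
  have hrhs : (((1 + B)⁻¹) * (A - B)).trace.re = C.trace.re - Fintype.card n := by
    have : (1 + B)⁻¹ * (A - B) = (1 + B)⁻¹ * (1 + A) - 1 := by
      rw [show A - B = (1 + A) - (1 + B) by abel, Matrix.mul_sub, hinvmul]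
    rw [this, trace_sub, Matrix.trace_one, htrC]
    simp [Complex.sub_re]
  rw [hrhs]
  exact hlog

section Sandwich
variable {N M : ℕ} {P : Matrix (Fin N) (Fin N) ℂ} {S : Matrix (Fin M) (Fin M) ℂ} {lam : ℝ}

/-- trace identity: `tr((R X W)(R Y W)ᴴ) = tr(P (X S Yᴴ))` where `R² = P`, `W² = S`. -/
lemma aux_sandwich_trace (hP : P.PosSemidef) (hS : S.PosSemidef)
    (X Y : Matrix (Fin N) (Fin M) ℂ) :
    ((hP.sqrt * X * hS.sqrt) * (hP.sqrt * Y * hS.sqrt)ᴴ).trace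
      = (P * (X * S * Yᴴ)).trace := by
  rw [conjTranspose_mul, conjTranspose_mul, hS.posSemidef_sqrt.1, hP.posSemidef_sqrt.1]
  have e : ∀ (R : Matrix (Fin N) (Fin N) ℂ) (W : Matrix (Fin M) (Fin M) ℂ), W * W = S →
      (R * X * W) * (W * (Yᴴ * R)) = R * (X * S * Yᴴ) * R := by
    intro R W h
    rw [← h]
    simp only [Matrix.mul_assoc]
  rw [e _ _ hS.sqrt_mul_self, trace_mul_cycle, ← Matrix.mul_assoc, hP.sqrt_mul_self, Matrix.mul_assoc]

/-- Frobenius bound on the sandwiched factor. -/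
lemma aux_sandwich_frob (hP : P.PosSemidef) (hP1 : ((1 : Matrix (Fin N) (Fin N) ℂ) - P).PosSemidef)
    (hS : S.PosSemidef) (hlam : 0 ≤ lam)
    (hSle : ((lam : ℂ) • (1 : Matrix (Fin M) (Fin M) ℂ) - S).PosSemidef)
    (X : Matrix (Fin N) (Fin M) ℂ) :
    frob (hP.sqrt * X * hS.sqrt) ≤ Real.sqrt lam * frob X := by
  have h1 : frob (hP.sqrt * X * hS.sqrt) ^ 2 ≤ lam * frob X ^ 2 := by
    rw [frob_sq, aux_sandwich_trace hP hS X X]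
    calc (P * (X * S * Xᴴ)).trace.re ≤ (X * S * Xᴴ).trace.re :=
          aux_trace_mono_one hP1 (hS.mul_mul_conjTranspose_same X)
      _ = ((Xᴴ * X) * S).trace.re := by rw [trace_mul_cycle, Matrix.mul_assoc]
      _ ≤ lam * (Xᴴ * X).trace.re :=
          aux_trace_mul_le_smul hSle (Matrix.posSemidef_conjTranspose_mul_self X)
      _ = lam * frob X ^ 2 := by rw [frob_sq, trace_mul_comm]
  calc frob (hP.sqrt * X * hS.sqrt)
      = Real.sqrt (frob (hP.sqrt * X * hS.sqrt) ^ 2) := by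
        rw [Real.sqrt_sq (frob_nonneg _)]
    _ ≤ Real.sqrt (lam * frob X ^ 2) := Real.sqrt_le_sqrt h1
    _ = Real.sqrt lam * frob X := by
        rw [Real.sqrt_mul hlam, Real.sqrt_sq (frob_nonneg _)]

/-- main sandwich bound. -/
lemma aux_sandwich_bound (hP : P.PosSemidef)
    (hP1 : ((1 : Matrix (Fin N) (Fin N) ℂ) - P).PosSemidef)
    (hS : S.PosSemidef) (hlam : 0 ≤ lam)
    (hSle : ((lam : ℂ) • (1 : Matrix (Fin M) (Fin M) ℂ) - S).PosSemidef)
    (X Y : Matrix (Fin N) (Fin M) ℂ) :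
    |(P * (X * S * Yᴴ)).trace.re| ≤ lam * (frob X * frob Y) := by
  rw [← aux_sandwich_trace hP hS X Y]
  calc |((hP.sqrt * X * hS.sqrt) * (hP.sqrt * Y * hS.sqrt)ᴴ).trace.re|
      ≤ frob (hP.sqrt * X * hS.sqrt) * frob (hP.sqrt * Y * hS.sqrt) :=
        frob_cauchy_schwarz _ _
    _ ≤ (Real.sqrt lam * frob X) * (Real.sqrt lam * frob Y) := by
        apply mul_le_mul (aux_sandwich_frob hP hP1 hS hlam hSle X)
          (aux_sandwich_frob hP hP1 hS hlam hSle Y) (frob_nonneg _)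
        exact mul_nonneg (Real.sqrt_nonneg _) (frob_nonneg _)
    _ = lam * (frob X * frob Y) := by
        rw [show Real.sqrt lam * frob X * (Real.sqrt lam * frob Y)
          = (Real.sqrt lam * Real.sqrt lam) * (frob X * frob Y) by ring,
          Real.mul_self_sqrt hlam]

end Sandwich

lemma frob_sub_comm {N M : ℕ} (A B : Matrix (Fin N) (Fin M) ℂ) :
    frob (A - B) = frob (B - A) := by
  unfold frob
  congr 1
  refine Finset.sum_congr rfl fun i _ => Finset.sum_congr rfl fun j _ => ?_
  rw [Matrix.sub_apply, Matrix.sub_apply, norm_sub_rev]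

lemma aux_one_sided {N M : ℕ} (G Gt : Matrix (Fin N) (Fin M) ℂ) (Sg : Matrix (Fin M) (Fin M) ℂ)
    (hSg : Sg.PosSemidef) {lam : ℝ} (hlam : 0 ≤ lam)
    (hEig : ∀ i, hSg.1.eigenvalues i ≤ lam) {γ : ℝ} (hγ : 0 < γ) :
    Real.log (((1 : Matrix (Fin N) (Fin N) ℂ) + (γ : ℂ) • (G * Sg * Gᴴ)).det.re) -
      Real.log (((1 : Matrix (Fin N) (Fin N) ℂ) + (γ : ℂ) • (Gt * Sg * Gtᴴ)).det.re) ≤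
      γ * lam * (frob G + frob Gt) * frob (G - Gt) := by
  set A := (γ : ℂ) • (G * Sg * Gᴴ) with hAdef
  set B := (γ : ℂ) • (Gt * Sg * Gtᴴ) with hBdef
  have hA : A.PosSemidef := aux_smul_psd (hSg.mul_mul_conjTranspose_same G) hγ.le
  have hB : B.PosSemidef := aux_smul_psd (hSg.mul_mul_conjTranspose_same Gt) hγ.le
  refine (aux_logdet_key hA hB).trans ?_
  set P := ((1 : Matrix (Fin N) (Fin N) ℂ) + B)⁻¹ with hPdef
  have hP : P.PosSemidef := (Matrix.PosDef.add_posSemidef Matrix.PosDef.one hB).inv.posSemidef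
  have hP1 : ((1 : Matrix (Fin N) (Fin N) ℂ) - P).PosSemidef := aux_one_sub_inv_psd hB
  have hSle := aux_lam_smul_sub_psd hSg hEig
  have hdecomp : A - B = (γ : ℂ) • (G * Sg * (G - Gt)ᴴ) + (γ : ℂ) • ((G - Gt) * Sg * Gtᴴ) := by
    rw [hAdef, hBdef, ← smul_add, ← smul_sub]
    congr 1
    rw [Matrix.conjTranspose_sub, Matrix.mul_sub, Matrix.sub_mul, Matrix.sub_mul]
    abel
  have hγre : ∀ X : Matrix (Fin N) (Fin N) ℂ,
      (P * ((γ : ℂ) • X)).trace.re = γ * (P * X).trace.re := by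
    intro X
    rw [Matrix.mul_smul, trace_smul]
    simp [Complex.smul_re]
  rw [hdecomp, Matrix.mul_add, trace_add, Complex.add_re, hγre, hγre]
  have h1 := aux_sandwich_bound hP hP1 hSg hlam hSle G (G - Gt)
  have h2 := aux_sandwich_bound hP hP1 hSg hlam hSle (G - Gt) Gt
  have b1 : (P * (G * Sg * (G - Gt)ᴴ)).trace.re ≤ lam * (frob G * frob (G - Gt)) :=
    (le_abs_self _).trans h1
  have b2 : (P * ((G - Gt) * Sg * Gtᴴ)).trace.re ≤ lam * (frob (G - Gt) * frob Gt) :=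
    (le_abs_self _).trans h2
  have := add_le_add (mul_le_mul_of_nonneg_left b1 hγ.le) (mul_le_mul_of_nonneg_left b2 hγ.le)
  refine this.trans (le_of_eq ?_)
  ring

end Aux

/-- Perturbation bound for the log-det capacity: if `Σ` is Hermitian PSD with largest eigenvalue
at most `λ`, then `|log det(I + γ G Σ Gᴴ) − log det(I + γ G̃ Σ G̃ᴴ)| ≤
γ λ (‖G‖_F + ‖G̃‖_F) ‖G − G̃‖_F`. -/
theorem log_det_perturbation_bound
    (N M : ℕ) (G Gt : Matrix (Fin N) (Fin M) ℂ) (Sg : Matrix (Fin M) (Fin M) ℂ)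
    (hSg : Sg.PosSemidef) (lam : ℝ) (hlam : 0 ≤ lam)
    (hEig : ∀ i, hSg.1.eigenvalues i ≤ lam) (γ : ℝ) (hγ : 0 < γ) :
    |Real.log (((1 : Matrix (Fin N) (Fin N) ℂ) + (γ : ℂ) • (G * Sg * Gᴴ)).det.re) -
        Real.log (((1 : Matrix (Fin N) (Fin N) ℂ) + (γ : ℂ) • (Gt * Sg * Gtᴴ)).det.re)| ≤
      γ * lam * (frob G + frob Gt) * frob (G - Gt) := by
  rw [abs_sub_le_iff]
  constructor
  · exact aux_one_sided G Gt Sg hSg hlam hEig hγ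
  · have h := aux_one_sided Gt G Sg hSg hlam hEig hγ
    rw [frob_sub_comm] at h
    exact h.trans (le_of_eq (by ring))
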